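/- Let T be a simplicial tree, let G be a group acting on T by graph automorphisms with exactly N < ∞ orbits of vertices, and let R_0 be a G-invariant decoration of T with neighbor refinement sequence (R_i). Then: (a) if R_{s+1} = R_s for some s ≥ 0, then R_i = R_s for all i ≥ s; and (b) there exists s ≤ N such that R_i = R_s for all i ≥ s. -/

import Mathlib

/-- The neighbor refinement sequence of a relation `R0` on the vertices of a graph `G`. -/
def nbhdRefine {V : Type*} (G : SimpleGraph V) (R0 : V → V → Prop) : ℕ → V → V → Prop
  | 0 => R0
  | (i + 1) => fun v w => R0 v w ∧ ∀ u : V,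
      {x : V | G.Adj v x ∧ nbhdRefine G R0 i x u}.encard =
      {x : V | G.Adj w x ∧ nbhdRefine G R0 i x u}.encard

section Helpers
variable {V : Type*} {ι : Type*}

lemma encard_biUnion_of_disjoint (s : Finset ι) (f : ι → Set V)
    (hd : ∀ i ∈ s, ∀ j ∈ s, i ≠ j → Disjoint (f i) (f j)) :
    (⋃ i ∈ s, f i).encard = ∑ i ∈ s, (f i).encard := by
  classical
  induction s using Finset.induction_on with
  | empty => simp
  | @insert a t hat ih =>
    rw [Finset.set_biUnion_insert, Finset.sum_insert hat,
      Set.encard_union_eq, ih]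
    · intro i hi j hj hij
      exact hd i (Finset.mem_insert_of_mem hi) j (Finset.mem_insert_of_mem hj) hij
    · rw [Set.disjoint_iUnion₂_right]
      intro i hi
      exact hd a (Finset.mem_insert_self a t) i (Finset.mem_insert_of_mem hi)
        (by rintro rfl; exact hat hi)

end Helpers

section Main

variable {V : Type*} (G : SimpleGraph V)
    {Γ : Type*} [Group Γ] [MulAction Γ V]
    (hact : ∀ (g : Γ) (u v : V), G.Adj u v → G.Adj (g • u) (g • v))
    (R0 : V → V → Prop) (hR0 : Equivalence R0)
    (hinv : ∀ (g : Γ) (v : V), R0 v (g • v))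

include hR0 in
lemma rel_equiv : ∀ i, Equivalence (nbhdRefine G R0 i)
  | 0 => hR0
  | (i+1) =>
    { refl := fun v => ⟨hR0.refl v, fun _ => rfl⟩
      symm := fun h => ⟨hR0.symm h.1, fun u => (h.2 u).symm⟩
      trans := fun h1 h2 => ⟨hR0.trans h1.1 h2.1, fun u => (h1.2 u).trans (h2.2 u)⟩ }

include hact hR0 hinv in
lemma rel_inv : ∀ (i : ℕ) (g : Γ) (v : V), nbhdRefine G R0 i v (g • v) := by
  intro i
  induction i with
  | zero => exact hinv
  | succ i ih =>
    intro g v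
    refine ⟨hinv g v, fun u => ?_⟩
    have hset : {x : V | G.Adj (g • v) x ∧ nbhdRefine G R0 i x u}
        = (fun y => g • y) '' {x : V | G.Adj v x ∧ nbhdRefine G R0 i x u} := by
      ext x
      simp only [Set.mem_image, Set.mem_setOf_eq]
      constructor
      · rintro ⟨hadj, hrel⟩
        refine ⟨g⁻¹ • x, ⟨?_, ?_⟩, smul_inv_smul g x⟩
        · have := hact g⁻¹ (g • v) x hadj
          rwa [inv_smul_smul] at this
        · exact (rel_equiv G R0 hR0 i).trans
            ((rel_equiv G R0 hR0 i).symm (by simpa using ih g⁻¹ x)) hrel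
      · rintro ⟨y, ⟨hadj, hrel⟩, rfl⟩
        exact ⟨hact g v y hadj,
          (rel_equiv G R0 hR0 i).trans ((rel_equiv G R0 hR0 i).symm (ih g y)) hrel⟩
    rw [hset, (MulAction.injective (β := V) g).encard_image]

include hact hR0 hinv in
lemma rel_orbit {v v' : V} (h : MulAction.orbitRel Γ V v v') (i : ℕ) :
    nbhdRefine G R0 i v v' := by
  obtain ⟨g, rfl⟩ : ∃ g : Γ, g • v' = v := h
  exact (rel_equiv G R0 hR0 i).symm (rel_inv G hact R0 hR0 hinv i g v')

lemma nbhd_rel_congr {i j : ℕ} (hij : ∀ x y : V, nbhdRefine G R0 i x y ↔ nbhdRefine G R0 j x y)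
    (v w : V) : nbhdRefine G R0 (i+1) v w ↔ nbhdRefine G R0 (j+1) v w := by
  have hset : ∀ (z u : V), {x : V | G.Adj z x ∧ nbhdRefine G R0 i x u}
      = {x : V | G.Adj z x ∧ nbhdRefine G R0 j x u} := by
    intro z u; ext x; simp [hij x u]
  show (R0 v w ∧ ∀ u, _) ↔ (R0 v w ∧ ∀ u, _)
  constructor <;> rintro ⟨h1, h2⟩ <;> refine ⟨h1, fun u => ?_⟩
  · rw [← hset v u, ← hset w u]; exact h2 u
  · rw [hset v u, hset w u]; exact h2 u

lemma rel_stable {s : ℕ}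
    (hs : ∀ v w : V, nbhdRefine G R0 (s + 1) v w ↔ nbhdRefine G R0 s v w) :
    ∀ i : ℕ, s ≤ i → ∀ v w : V, nbhdRefine G R0 i v w ↔ nbhdRefine G R0 s v w := by
  intro i hi
  induction i, hi using Nat.le_induction with
  | base => intro v w; rfl
  | succ i hi ih =>
    intro v w
    exact (nbhd_rel_congr G R0 ih v w).trans (hs v w)


section Refine
variable [hfin : Finite (Quotient (MulAction.orbitRel Γ V))]

include hact hR0 hinv hfin in
lemma rel_refines : ∀ (i : ℕ) (v w : V),
    nbhdRefine G R0 (i+1) v w → nbhdRefine G R0 i v w := by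
  intro i
  induction i with
  | zero => exact fun v w h => h.1
  | succ i ih =>
    intro v w h
    refine ⟨h.1, fun u => ?_⟩
    classical
    set St : Setoid V := ⟨nbhdRefine G R0 (i+1), rel_equiv G R0 hR0 (i+1)⟩ with hSt
    have hStr : ∀ a b : V, St.r a b ↔ nbhdRefine G R0 (i+1) a b := fun a b => Iff.rfl
    have hsurj : Function.Surjective
        (fun q : Quotient (MulAction.orbitRel Γ V) => (Quotient.mk St q.out)) := by
      intro c
      refine ⟨Quotient.mk _ c.out, ?_⟩
      have horb : MulAction.orbitRel Γ V (Quotient.mk (MulAction.orbitRel Γ V) c.out).out c.out :=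
        Quotient.mk_out c.out
      have h1 : nbhdRefine G R0 (i+1) (Quotient.mk (MulAction.orbitRel Γ V) c.out).out c.out :=
        rel_orbit G hact R0 hR0 hinv horb (i+1)
      calc Quotient.mk St (Quotient.mk (MulAction.orbitRel Γ V) c.out).out
          = Quotient.mk St c.out := Quotient.sound h1
        _ = c := c.out_eq
    have : Finite (Quotient St) := Finite.of_surjective _ hsurj
    have : Fintype (Quotient St) := Fintype.ofFinite _
    -- the decomposition families
    set F : V → Quotient St → Set V := fun z c =>
      if nbhdRefine G R0 i c.out u then {x : V | G.Adj z x ∧ nbhdRefine G R0 (i+1) x c.out}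
      else ∅ with hF
    have hcover : ∀ z : V, {x : V | G.Adj z x ∧ nbhdRefine G R0 i x u}
        = ⋃ c ∈ (Finset.univ : Finset (Quotient St)), F z c := by
      intro z
      ext x
      simp only [Set.mem_iUnion, Set.mem_setOf_eq, Finset.mem_univ, exists_prop, true_and]
      constructor
      · rintro ⟨hadj, hrel⟩
        refine ⟨Quotient.mk St x, ?_⟩
        have hx : nbhdRefine G R0 (i+1) x (Quotient.mk St x).out :=
          (rel_equiv G R0 hR0 (i+1)).symm (Quotient.mk_out x)
        have hxi : nbhdRefine G R0 i x (Quotient.mk St x).out := ih _ _ hx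
        have hcond : nbhdRefine G R0 i (Quotient.mk St x).out u :=
          (rel_equiv G R0 hR0 i).trans ((rel_equiv G R0 hR0 i).symm hxi) hrel
        rw [hF]
        simp only [hcond, if_true]
        exact ⟨hadj, hx⟩
      · rintro ⟨c, hc⟩
        rw [hF] at hc
        by_cases hcond : nbhdRefine G R0 i c.out u
        · simp only [hcond, if_true, Set.mem_setOf_eq] at hc
          exact ⟨hc.1, (rel_equiv G R0 hR0 i).trans (ih _ _ hc.2) hcond⟩
        · simp [hcond] at hc
    have hdisj : ∀ z : V, ∀ c ∈ (Finset.univ : Finset (Quotient St)),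
        ∀ c' ∈ (Finset.univ : Finset (Quotient St)), c ≠ c' → Disjoint (F z c) (F z c') := by
      intro z c _ c' _ hne
      rw [Set.disjoint_left]
      intro x hx hx'
      rw [hF] at hx hx'
      by_cases h1 : nbhdRefine G R0 i c.out u
      · by_cases h2 : nbhdRefine G R0 i c'.out u
        · simp only [h1, h2, if_true, Set.mem_setOf_eq] at hx hx'
          have : nbhdRefine G R0 (i+1) c.out c'.out :=
            (rel_equiv G R0 hR0 (i+1)).trans ((rel_equiv G R0 hR0 (i+1)).symm hx.2) hx'.2
          exact hne (by rw [← c.out_eq, ← c'.out_eq]; exact Quotient.sound this)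
        · simp [h2] at hx'
      · simp [h1] at hx
    have hcomp : ∀ c : Quotient St, (F v c).encard = (F w c).encard := by
      intro c
      rw [hF]
      by_cases hcond : nbhdRefine G R0 i c.out u
      · simp only [hcond, if_true]
        exact h.2 c.out
      · simp [hcond]
    rw [hcover v, hcover w, encard_biUnion_of_disjoint _ _ (hdisj v),
      encard_biUnion_of_disjoint _ _ (hdisj w)]
    exact Finset.sum_congr rfl fun c _ => hcomp c

end Refine

section Count
variable [hfin : Finite (Quotient (MulAction.orbitRel Γ V))]

include hact hR0 hinv hfin in
lemma exists_stable_step (N : ℕ) (hN : Nat.card (Quotient (MulAction.orbitRel Γ V)) = N) :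
    ∃ s : ℕ, s ≤ N ∧ ∀ v w : V, nbhdRefine G R0 (s + 1) v w ↔ nbhdRefine G R0 s v w := by
  classical
  cases isEmpty_or_nonempty V with
  | inl hV => exact ⟨0, Nat.zero_le N, fun v _ => isEmptyElim v⟩
  | inr hV =>
    set Q := Quotient (MulAction.orbitRel Γ V) with hQ
    set Si : ℕ → Q → Q → Prop := fun i a b => nbhdRefine G R0 i a.out b.out with hSi
    have SiEquiv : ∀ i, Equivalence (Si i) := fun i =>
      { refl := fun a => (rel_equiv G R0 hR0 i).refl a.out
        symm := fun h => (rel_equiv G R0 hR0 i).symm h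
        trans := fun h1 h2 => (rel_equiv G R0 hR0 i).trans h1 h2 }
    set SiSet : ℕ → Setoid Q := fun i => ⟨Si i, SiEquiv i⟩ with hSiSet
    have key : ∀ (i : ℕ) (v w : V), nbhdRefine G R0 i v w ↔
        Si i (Quotient.mk (MulAction.orbitRel Γ V) v) (Quotient.mk (MulAction.orbitRel Γ V) w) := by
      intro i v w
      have hv : nbhdRefine G R0 i (Quotient.mk (MulAction.orbitRel Γ V) v).out v :=
        rel_orbit G hact R0 hR0 hinv (Quotient.mk_out v) i
      have hw : nbhdRefine G R0 i (Quotient.mk (MulAction.orbitRel Γ V) w).out w :=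
        rel_orbit G hact R0 hR0 hinv (Quotient.mk_out w) i
      constructor
      · intro h
        exact (rel_equiv G R0 hR0 i).trans hv
          ((rel_equiv G R0 hR0 i).trans h ((rel_equiv G R0 hR0 i).symm hw))
      · intro h
        exact (rel_equiv G R0 hR0 i).trans ((rel_equiv G R0 hR0 i).symm hv)
          ((rel_equiv G R0 hR0 i).trans h hw)
    have hrefQ : ∀ (i : ℕ) (a b : Q), Si (i+1) a b → Si i a b := fun i a b h =>
      rel_refines G hact R0 hR0 hinv i a.out b.out h
    set nc : ℕ → ℕ := fun i => Nat.card (Quotient (SiSet i)) with hnc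
    have hsurjmk : ∀ i, Function.Surjective (Quotient.mk (SiSet i)) := fun i c =>
      ⟨c.out, c.out_eq⟩
    have hfinq : ∀ i, Finite (Quotient (SiSet i)) := fun i =>
      Finite.of_surjective _ (hsurjmk i)
    have hnceq : ∀ i, nc i = Nat.card (Quotient (SiSet i)) := fun _ => rfl
    have hle : ∀ i, nc i ≤ N := by
      intro i
      have := Nat.card_le_card_of_surjective _ (hsurjmk i)
      rw [hnceq i]
      omega
    have hstrict : ∀ i, (¬ ∀ a b : Q, Si (i+1) a b ↔ Si i a b) → nc i < nc (i+1) := by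
      intro i hne
      set φ : Quotient (SiSet (i+1)) → Quotient (SiSet i) :=
        Quotient.lift (fun a => Quotient.mk (SiSet i) a)
          (fun a b h => Quotient.sound (hrefQ i a b h)) with hφ
      have hφsurj : Function.Surjective φ := by
        intro c
        exact ⟨Quotient.mk (SiSet (i+1)) c.out, c.out_eq⟩
      have := hfinq (i+1)
      have h1 : nc i ≤ nc (i+1) := by
        rw [hnceq i, hnceq (i+1)]
        exact Nat.card_le_card_of_surjective φ hφsurj
      rcases Nat.lt_or_ge (nc i) (nc (i+1)) with hlt | hge
      · exact hlt
      exfalso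
      have hcard : Nat.card (Quotient (SiSet (i+1))) = Nat.card (Quotient (SiSet i)) := by
        rw [← hnceq i, ← hnceq (i+1)]
        omega
      have hbij : Function.Bijective φ :=
        (Nat.bijective_iff_surjective_and_card φ).2 ⟨hφsurj, hcard⟩
      apply hne
      intro a b
      refine ⟨hrefQ i a b, fun h => ?_⟩
      have : φ (Quotient.mk (SiSet (i+1)) a) = φ (Quotient.mk (SiSet (i+1)) b) :=
        Quotient.sound h
      exact Quotient.exact (hbij.1 this)
    by_contra hcon
    push_neg at hcon
    have hSistrict : ∀ s : ℕ, s ≤ N → nc s < nc (s+1) := by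
      intro s hs
      refine hstrict s fun hall => ?_
      obtain ⟨v, w, hvw⟩ := hcon s hs
      have hiff : nbhdRefine G R0 (s+1) v w ↔ nbhdRefine G R0 s v w :=
        (key (s+1) v w).trans ((hall _ _).trans (key s v w).symm)
      rcases hvw with ⟨h1, h2⟩ | ⟨h1, h2⟩
      · exact h2 (hiff.mp h1)
      · exact h1 (hiff.mpr h2)
    have hgrow : ∀ k : ℕ, k ≤ N + 1 → k + 1 ≤ nc k := by
      intro k
      induction k with
      | zero =>
        intro _
        have : Nonempty Q := Nonempty.map (Quotient.mk _) hV
        have : Nonempty (Quotient (SiSet 0)) := Nonempty.map (Quotient.mk _) this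
        have := hfinq 0
        have := Nat.card_pos (α := Quotient (SiSet 0))
        rw [hnceq 0]
        omega
      | succ k ih =>
        intro hk
        have h1 := ih (by omega)
        have h2 := hSistrict k (by omega)
        omega
    have := hgrow (N+1) le_rfl
    have := hle (N+1)
    omega

end Count

end Main

/-- For a cocompact action with `N` orbits of vertices and a `G`-invariant initial decoration:
(a) once the neighbor refinement sequence is constant at one step, it is constant forever; and
(b) the sequence stabilizes at some index `s ≤ N`. -/
theorem neighbor_refinement_stabilizes
    {V : Type*} (G : SimpleGraph V) (hT : G.IsTree)
    {Γ : Type*} [Group Γ] [MulAction Γ V]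
    (hact : ∀ (g : Γ) (u v : V), G.Adj u v → G.Adj (g • u) (g • v))
    (N : ℕ)
    (hfin : Finite (Quotient (MulAction.orbitRel Γ V)))
    (hN : Nat.card (Quotient (MulAction.orbitRel Γ V)) = N)
    (R0 : V → V → Prop) (hR0 : Equivalence R0)
    (hinv : ∀ (g : Γ) (v : V), R0 v (g • v)) :
    (∀ s : ℕ, (∀ v w : V, nbhdRefine G R0 (s + 1) v w ↔ nbhdRefine G R0 s v w) →
      ∀ i : ℕ, s ≤ i → ∀ v w : V, nbhdRefine G R0 i v w ↔ nbhdRefine G R0 s v w) ∧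
    (∃ s : ℕ, s ≤ N ∧ ∀ i : ℕ, s ≤ i →
      ∀ v w : V, nbhdRefine G R0 i v w ↔ nbhdRefine G R0 s v w) := by
  constructor
  · intro s hs
    exact rel_stable G R0 hs
  · obtain ⟨s, hsN, hstep⟩ := exists_stable_step G hact R0 hR0 hinv N hN
    exact ⟨s, hsN, rel_stable G R0 hstep⟩
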